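/- Let n ≥ 5 be odd. Let T be the caterpillar with internal nodes x_1,...,x_{n-1}, y, where edges (x_i,x_{i+1}) for 1 ≤ i < ⌊n/2⌋ and ⌈n/2⌉ ≤ i < n−1 have weight 2, leaves v_i, u_i are attached to x_i with weight-n edges (1 ≤ i ≤ n−1), and y is connected to x_{⌊n/2⌋}, x_{⌈n/2⌉}, and leaf v_n each with weight-1 edges. Then PCG(T, 2n−2, 2n+2) equals the graph C_n ⊠ P_2 with the vertex u_n removed. -/

import Mathlib

open SimpleGraph

/-- A tree with positive real edge weights. -/
structure WTree (α : Type) where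
  g : SimpleGraph α
  isTree : g.IsTree
  w : α → α → ℝ
  w_symm : ∀ a b, w a b = w b a
  w_pos : ∀ a b, g.Adj a b → 0 < w a b

/-- The weighted distance between two vertices of a weighted tree: the sum of
the weights of the edges on the unique path between them. -/
noncomputable def WTree.dist {α : Type} (T : WTree α) (u v : α) : ℝ :=
  (((T.isTree.existsUnique_path u v).exists.choose).darts.map
    (fun d => T.w d.toProd.1 d.toProd.2)).sum

/-- A vertex of a weighted tree is a leaf if it has exactly one neighbor. -/
def WTree.IsLeaf {α : Type} (T : WTree α) (v : α) : Prop :=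
  ∃! u, T.g.Adj v u

/-- `G = PCG(T, dmin, dmax)` via the leaf-assignment `f`. -/
def IsPCGWith {V β : Type} (G : SimpleGraph V) (T : WTree β) (f : V → β)
    (dmin dmax : ℝ) : Prop :=
  Function.Injective f ∧ (∀ v, T.IsLeaf (f v)) ∧ (∀ b, T.IsLeaf b → ∃ v, f v = b) ∧
    ∀ u v : V, u ≠ v →
      (G.Adj u v ↔ dmin ≤ T.dist (f u) (f v) ∧ T.dist (f u) (f v) ≤ dmax)

/-- A graph is a pairwise compatibility graph. -/
def IsPCG {V : Type} (G : SimpleGraph V) : Prop :=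
  ∃ (β : Type) (T : WTree β) (f : V → β) (dmin dmax : ℝ),
    0 ≤ dmin ∧ dmin ≤ dmax ∧ IsPCGWith G T f dmin dmax

/-- The strong product `C_n ⊠ P_2`: vertices `(i, s)` with `s : Fin 2`
(`u_i = (i, 0)`, `v_i = (i, 1)`), adjacent iff distinct and the first
coordinates are equal or consecutive modulo `n`. -/
def strongProdC2 (n : ℕ) : SimpleGraph (Fin n × Fin 2) where
  Adj x y := x ≠ y ∧ (x.1 = y.1 ∨ (x.1.val + 1) % n = y.1.val ∨
    (y.1.val + 1) % n = x.1.val)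
  symm := by
    constructor
    rintro x y ⟨hne, h⟩
    refine ⟨hne.symm, ?_⟩
    rcases h with h | h | h
    · exact Or.inl h.symm
    · exact Or.inr (Or.inr h)
    · exact Or.inr (Or.inl h)
  loopless := ⟨fun x h => h.1 rfl⟩

/-- Vertices of the caterpillar for odd `n`: internal nodes `x_{i+1} = .inl i`,
leaves `u_{i+1} = .inr (.inl i)`, `v_{i+1} = .inr (.inr (.inl i))` for
`i : Fin (n-1)`, the internal node `y = .inr (.inr (.inr (.inl ())))` and the
extra leaf `v_n = .inr (.inr (.inr (.inr ())))`. -/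
abbrev CatVO (n : ℕ) := Fin (n - 1) ⊕ (Fin (n - 1) ⊕ (Fin (n - 1) ⊕ (Unit ⊕ Unit)))

/-- Edges of the caterpillar (odd case): consecutive spine nodes except between
`x_{⌊n/2⌋}` and `x_{⌈n/2⌉}`, each `u_i` and `v_i` attached to `x_i`, and `y`
attached to `x_{⌊n/2⌋}`, `x_{⌈n/2⌉}` and `v_n`. -/
def catRelO (n : ℕ) : CatVO n → CatVO n → Prop := fun a b =>
  match a, b with
  | .inl i, .inl j => i.val + 1 = j.val ∧ j.val ≠ n / 2
  | .inr (.inl i), .inl j => i = j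
  | .inr (.inr (.inl i)), .inl j => i = j
  | .inr (.inr (.inr (.inl _))), .inl j => j.val + 1 = n / 2 ∨ j.val = n / 2
  | .inr (.inr (.inr (.inl _))), .inr (.inr (.inr (.inr _))) => True
  | _, _ => False

/-- The caterpillar tree graph for the odd case. -/
def catGraphO (n : ℕ) : SimpleGraph (CatVO n) := SimpleGraph.fromRel (catRelO n)

/-- Edge weights for the odd caterpillar: spine edges weigh `2`, all edges
incident to `y` or `v_n` weigh `1`, and the edges to the leaves `u_i, v_i`
weigh `n`. -/
def catWO (n : ℕ) : CatVO n → CatVO n → ℝ := fun a b =>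
  match a, b with
  | .inl _, .inl _ => 2
  | .inr (.inr (.inr _)), _ => 1
  | _, .inr (.inr (.inr _)) => 1
  | _, _ => (n : ℝ)

/-- The assignment of the vertices of `C_n ⊠ P_2` (minus `u_n`) to the leaves
of the odd caterpillar. -/
def leafMapO (n : ℕ) : Fin n × Fin 2 → CatVO n := fun p =>
  if h : p.1.val < n - 1 then
    if p.2 = 0 then .inr (.inl ⟨p.1.val, h⟩) else .inr (.inr (.inl ⟨p.1.val, h⟩))
  else .inr (.inr (.inr (.inr ())))

section AuxWalk

variable {α : Type} {G : SimpleGraph α}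

lemma isPath_append_of {u v w : α} {p : G.Walk u v} {q : G.Walk v w}
    (hp : p.IsPath) (hq : q.IsPath)
    (hmeet : ∀ a, a ∈ p.support → a ∈ q.support → a = v) : (p.append q).IsPath := by
  rw [Walk.isPath_def, Walk.support_append]
  refine List.Nodup.append (Walk.isPath_def _ |>.mp hp) ((Walk.isPath_def _ |>.mp hq).tail) ?_
  intro a hap haq
  have haq' : a ∈ q.support := by
    rw [Walk.support_eq_cons]; exact List.mem_cons_of_mem _ haq
  have hav : a = v := hmeet a hap haq'
  subst hav
  have := (Walk.isPath_def _ |>.mp hq)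
  rw [Walk.support_eq_cons] at this
  exact (List.nodup_cons.mp this).1 haq

lemma isPath_concat_of {u v w : α} {p : G.Walk u v} (hp : p.IsPath) (h : G.Adj v w)
    (hw : w ∉ p.support) : (p.concat h).IsPath := by
  rw [Walk.concat_eq_append]
  refine isPath_append_of hp (by simp [h.ne]) ?_
  intro a hap haq
  simp only [Walk.support_cons, Walk.support_nil, List.mem_cons, List.mem_singleton,
    List.not_mem_nil, or_false] at haq
  rcases haq with rfl | rfl
  · rfl
  · exact absurd hap hw

lemma WTree.dist_eq_of_isPath (T : WTree α) {u v : α} (p : T.g.Walk u v)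
    (hp : p.IsPath) :
    T.dist u v = (p.darts.map (fun d => T.w d.toProd.1 d.toProd.2)).sum := by
  have h : (T.isTree.existsUnique_path u v).exists.choose = p :=
    (T.isTree.existsUnique_path u v).unique
      (T.isTree.existsUnique_path u v).exists.choose_spec hp
  rw [WTree.dist, h]

lemma WTree.dist_comm (T : WTree α) (u v : α) : T.dist u v = T.dist v u := by
  obtain ⟨p, hp, -⟩ := T.isTree.existsUnique_path u v
  rw [T.dist_eq_of_isPath p hp, T.dist_eq_of_isPath p.reverse hp.reverse,
    Walk.darts_reverse, List.map_reverse, List.sum_reverse, List.map_map]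
  congr 1
  apply List.map_congr_left
  intro d _
  simp only [Function.comp_apply, SimpleGraph.Dart.symm_toProd, Prod.fst_swap, Prod.snd_swap]
  exact (T.w_symm _ _).symm

end AuxWalk
section Cat

variable {n : ℕ} {T : WTree (CatVO n)}

/-- short names -/
abbrev yO (n : ℕ) : CatVO n := .inr (.inr (.inr (.inl ())))
abbrev vnO (n : ℕ) : CatVO n := .inr (.inr (.inr (.inr ())))

def lfO (n : ℕ) (s : Fin 2) (i : ℕ) (h : i < n - 1) : CatVO n :=
  if s = 0 then .inr (.inl ⟨i, h⟩) else .inr (.inr (.inl ⟨i, h⟩))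

lemma adj_xx (hg : T.g = catGraphO n) {i j : ℕ} (hi : i < n - 1) (hj : j < n - 1)
    (hij : i + 1 = j) (hgap : j ≠ n / 2) :
    T.g.Adj (.inl ⟨i, hi⟩) (.inl ⟨j, hj⟩) := by
  rw [hg, catGraphO, fromRel_adj]
  exact ⟨by simp [Fin.ext_iff]; omega, Or.inl ⟨hij, hgap⟩⟩

lemma adj_lf_x (hg : T.g = catGraphO n) (s : Fin 2) {i : ℕ} (hi : i < n - 1) :
    T.g.Adj (lfO n s i hi) (.inl ⟨i, hi⟩) := by
  rw [hg, catGraphO, fromRel_adj, lfO]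
  split <;> exact ⟨by simp, Or.inl rfl⟩

lemma adj_y_x (hg : T.g = catGraphO n) {j : ℕ} (hj : j < n - 1)
    (h : j + 1 = n / 2 ∨ j = n / 2) :
    T.g.Adj (yO n) (.inl ⟨j, hj⟩) := by
  rw [hg, catGraphO, fromRel_adj]
  exact ⟨by simp, Or.inl h⟩

lemma adj_y_vn (hg : T.g = catGraphO n) : T.g.Adj (yO n) (vnO n) := by
  rw [hg, catGraphO, fromRel_adj]
  exact ⟨by simp, Or.inl trivial⟩

def spineW (hg : T.g = catGraphO n) : (i j : ℕ) → (hj : j < n - 1) → (hij : i ≤ j) →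
    (hside : j < n / 2 ∨ n / 2 ≤ i) → T.g.Walk (.inl ⟨i, by omega⟩) (.inl ⟨j, hj⟩)
  | i, j, hj, hij, hside =>
    if h : i = j then
      (Walk.nil : T.g.Walk (.inl ⟨i, by omega⟩) _).copy rfl (by subst h; rfl)
    else
      Walk.cons (adj_xx hg (by omega) (by omega) rfl (by omega))
        (spineW hg (i + 1) j hj (by omega) (by omega))
  termination_by i j => j - i

lemma spineW_sum (hg : T.g = catGraphO n) (hw : T.w = catWO n)
    (i j : ℕ) (hj : j < n - 1) (hij : i ≤ j) (hside : j < n / 2 ∨ n / 2 ≤ i) :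
    ((spineW hg i j hj hij hside).darts.map (fun d => T.w d.toProd.1 d.toProd.2)).sum
      = 2 * ((j : ℝ) - (i : ℝ)) := by
  suffices H : ∀ (k i : ℕ) (hij : i ≤ j) (hside : j < n / 2 ∨ n / 2 ≤ i), j - i = k →
      ((spineW hg i j hj hij hside).darts.map (fun d => T.w d.toProd.1 d.toProd.2)).sum
        = 2 * ((j : ℝ) - (i : ℝ)) from H _ i hij hside rfl
  intro k
  induction k with
  | zero =>
    intro i hij hside hd
    have h : i = j := by omega
    rw [spineW, dif_pos h]
    subst h
    simp
  | succ k ih =>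
    intro i hij hside hd
    rw [spineW, dif_neg (by omega)]
    simp only [Walk.darts_cons, List.map_cons, List.sum_cons]
    rw [ih (i + 1) (by omega) (by omega) (by omega), hw]
    have : catWO n (Sum.inl ⟨i, by omega⟩) (Sum.inl ⟨i + 1, by omega⟩) = 2 := rfl
    rw [this]
    have : (i : ℝ) + 1 ≤ (j : ℝ) := by exact_mod_cast by omega
    push_cast
    ring

lemma spineW_support (hg : T.g = catGraphO n)
    (i j : ℕ) (hj : j < n - 1) (hij : i ≤ j) (hside : j < n / 2 ∨ n / 2 ≤ i) :
    ∀ a ∈ (spineW hg i j hj hij hside).support,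
      ∃ (m : ℕ) (hm : m < n - 1), i ≤ m ∧ m ≤ j ∧ a = .inl ⟨m, hm⟩ := by
  suffices H : ∀ (k i : ℕ) (hij : i ≤ j) (hside : j < n / 2 ∨ n / 2 ≤ i), j - i = k →
      ∀ a ∈ (spineW hg i j hj hij hside).support,
        ∃ (m : ℕ) (hm : m < n - 1), i ≤ m ∧ m ≤ j ∧ a = Sum.inl ⟨m, hm⟩ from H _ i hij hside rfl
  intro k
  induction k with
  | zero =>
    intro i hij hside hd
    have h : i = j := by omega
    rw [spineW, dif_pos h]
    subst h
    simp only [Walk.support_copy, Walk.support_nil, List.mem_singleton]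
    rintro a rfl
    exact ⟨i, by omega, le_rfl, le_rfl, rfl⟩
  | succ k ih =>
    intro i hij hside hd
    rw [spineW, dif_neg (by omega)]
    simp only [Walk.support_cons, List.mem_cons]
    rintro a (rfl | ha)
    · exact ⟨i, by omega, le_rfl, hij, rfl⟩
    · obtain ⟨m, hm, h1, h2, rfl⟩ := ih (i + 1) (by omega) (by omega) (by omega) a ha
      exact ⟨m, hm, by omega, h2, rfl⟩

lemma spineW_isPath (hg : T.g = catGraphO n)
    (i j : ℕ) (hj : j < n - 1) (hij : i ≤ j) (hside : j < n / 2 ∨ n / 2 ≤ i) :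
    (spineW hg i j hj hij hside).IsPath := by
  suffices H : ∀ (k i : ℕ) (hij : i ≤ j) (hside : j < n / 2 ∨ n / 2 ≤ i), j - i = k →
      (spineW hg i j hj hij hside).IsPath from H _ i hij hside rfl
  intro k
  induction k with
  | zero =>
    intro i hij hside hd
    have h : i = j := by omega
    rw [spineW, dif_pos h]
    subst h
    simp
  | succ k ih =>
    intro i hij hside hd
    rw [spineW, dif_neg (by omega)]
    rw [Walk.cons_isPath_iff]
    refine ⟨ih (i + 1) (by omega) (by omega) (by omega), ?_⟩
    intro hmem
    obtain ⟨m, hm, h1, h2, he⟩ := spineW_support hg (i + 1) j hj (by omega) (by omega) _ hmem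
    simp only [Sum.inl.injEq, Fin.mk.injEq] at he
    omega

end Cat
section XW

variable {n : ℕ} {T : WTree (CatVO n)}

def xW (hg : T.g = catGraphO n) (hn : 5 ≤ n) (i j : ℕ) (hj : j < n - 1) (hij : i ≤ j) :
    T.g.Walk (.inl ⟨i, by omega⟩) (.inl ⟨j, hj⟩) :=
  if hside : j < n / 2 ∨ n / 2 ≤ i then spineW hg i j hj hij hside
  else
    (spineW hg i (n / 2 - 1) (by omega) (by omega) (by omega)).append
      (Walk.cons ((adj_y_x hg (by omega) (Or.inl (by omega))).symm)
        (Walk.cons (adj_y_x hg (by omega) (Or.inr rfl))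
          (spineW hg (n / 2) j hj (by omega) (Or.inr le_rfl))))

lemma xW_sum (hg : T.g = catGraphO n) (hw : T.w = catWO n) (hn : 5 ≤ n)
    (i j : ℕ) (hj : j < n - 1) (hij : i ≤ j) :
    ((xW hg hn i j hj hij).darts.map (fun d => T.w d.toProd.1 d.toProd.2)).sum
      = 2 * ((j : ℝ) - (i : ℝ)) := by
  rw [xW]
  split
  · exact spineW_sum hg hw i j hj hij _
  · rename_i hside
    simp only [Walk.darts_append, Walk.darts_cons, List.map_append, List.map_cons,
      List.sum_append, List.sum_cons]
    rw [spineW_sum hg hw, spineW_sum hg hw, hw]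
    have h1 : catWO n (Sum.inl (⟨n / 2 - 1, by omega⟩ : Fin (n-1))) (yO n) = 1 := rfl
    have h2 : catWO n (yO n) (Sum.inl (⟨n / 2, by omega⟩ : Fin (n-1))) = 1 := rfl
    rw [h1, h2]
    have hc : ((n / 2 - 1 : ℕ) : ℝ) = ((n / 2 : ℕ) : ℝ) - 1 := by
      rw [Nat.cast_sub (by omega)]; simp
    rw [hc]
    ring

lemma xW_support (hg : T.g = catGraphO n) (hn : 5 ≤ n)
    (i j : ℕ) (hj : j < n - 1) (hij : i ≤ j) :
    ∀ a ∈ (xW hg hn i j hj hij).support,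
      (∃ (m : ℕ) (hm : m < n - 1), i ≤ m ∧ m ≤ j ∧ a = Sum.inl ⟨m, hm⟩) ∨ a = yO n := by
  rw [xW]
  split
  · intro a ha
    exact Or.inl (spineW_support hg i j hj hij _ a ha)
  · rename_i hside
    intro a ha
    rw [Walk.mem_support_append_iff] at ha
    rcases ha with ha | ha
    · obtain ⟨m, hm, h1, h2, rfl⟩ := spineW_support hg _ _ _ _ _ a ha
      exact Or.inl ⟨m, hm, h1, by omega, rfl⟩
    · simp only [Walk.support_cons, List.mem_cons] at ha
      rcases ha with rfl | rfl | ha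
      · exact Or.inl ⟨n / 2 - 1, by omega, by omega, by omega, rfl⟩
      · exact Or.inr rfl
      · obtain ⟨m, hm, h1, h2, rfl⟩ := spineW_support hg _ _ _ _ _ a ha
        exact Or.inl ⟨m, hm, by omega, h2, rfl⟩

lemma xW_isPath (hg : T.g = catGraphO n) (hn : 5 ≤ n)
    (i j : ℕ) (hj : j < n - 1) (hij : i ≤ j) :
    (xW hg hn i j hj hij).IsPath := by
  rw [xW]
  split
  · exact spineW_isPath hg i j hj hij _
  · rename_i hside
    refine isPath_append_of (spineW_isPath hg _ _ _ _ _) ?_ ?_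
    · rw [Walk.cons_isPath_iff, Walk.cons_isPath_iff]
      refine ⟨⟨spineW_isPath hg _ _ _ _ _, ?_⟩, ?_⟩
      · intro hmem
        obtain ⟨m, hm, h1, h2, he⟩ := spineW_support hg _ _ _ _ _ _ hmem
        exact (by simp at he : False)
      · intro hmem
        simp only [Walk.support_cons, List.mem_cons] at hmem
        rcases hmem with he | hmem
        · exact (by simp at he : False)
        · obtain ⟨m, hm, h1, h2, he⟩ := spineW_support hg _ _ _ _ _ _ hmem
          simp only [Sum.inl.injEq, Fin.mk.injEq] at he
          omega
    · intro a hap haq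
      obtain ⟨m, hm, h1, h2, rfl⟩ := spineW_support hg _ _ _ _ _ a hap
      simp only [Walk.support_cons, List.mem_cons] at haq
      rcases haq with he | he | hmem
      · exact he
      · exact (by simp at he : False).elim
      · obtain ⟨m', hm', h1', h2', he⟩ := spineW_support hg _ _ _ _ _ _ hmem
        simp only [Sum.inl.injEq, Fin.mk.injEq] at he
        omega

end XW
section Dist

variable {n : ℕ} {T : WTree (CatVO n)}

lemma lfO_ne_inl {s : Fin 2} {i : ℕ} {h : i < n - 1} {a : Fin (n-1)} :
    lfO n s i h ≠ Sum.inl a := by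
  rw [lfO]; split <;> simp

lemma lfO_ne_y {s : Fin 2} {i : ℕ} {h : i < n - 1} : lfO n s i h ≠ yO n := by
  rw [lfO]; split <;> simp

lemma lfO_ne_vn {s : Fin 2} {i : ℕ} {h : i < n - 1} : lfO n s i h ≠ vnO n := by
  rw [lfO]; split <;> simp

lemma lfO_ne_lfO {s t : Fin 2} {i j : ℕ} {hi : i < n - 1} {hj : j < n - 1}
    (h : i ≠ j ∨ s ≠ t) : lfO n s i hi ≠ lfO n t j hj := by
  fin_cases s <;> fin_cases t <;> simp_all [lfO, Fin.ext_iff] <;> omega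

lemma w_lf (hw : T.w = catWO n) (s : Fin 2) {i : ℕ} (h : i < n - 1) :
    T.w (lfO n s i h) (Sum.inl ⟨i, h⟩) = n := by
  rw [hw, lfO]; split <;> rfl

lemma lfO_not_mem_xW (hg : T.g = catGraphO n) (hn : 5 ≤ n) {s : Fin 2} {k : ℕ}
    {hk : k < n - 1} {i j : ℕ} {hj : j < n - 1} {hij : i ≤ j} :
    lfO n s k hk ∉ (xW hg hn i j hj hij).support := by
  intro hmem
  rcases xW_support hg hn i j hj hij _ hmem with ⟨m, hm, _, _, he⟩ | he
  · exact lfO_ne_inl he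
  · exact lfO_ne_y he

lemma dist_lf_lf_lt (hg : T.g = catGraphO n) (hw : T.w = catWO n) (hn : 5 ≤ n)
    {i j : ℕ} (hi : i < n - 1) (hj : j < n - 1) (hij : i < j) (s t : Fin 2) :
    T.dist (lfO n s i hi) (lfO n t j hj) = 2 * (n : ℝ) + 2 * ((j : ℝ) - (i : ℝ)) := by
  have hq := isPath_concat_of (xW_isPath hg hn i j hj hij.le) (adj_lf_x hg t hj).symm
    (lfO_not_mem_xW hg hn)
  have hp : (Walk.cons (adj_lf_x hg s hi)
      ((xW hg hn i j hj hij.le).concat (adj_lf_x hg t hj).symm)).IsPath := by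
    rw [Walk.cons_isPath_iff]
    refine ⟨hq, ?_⟩
    rw [Walk.support_concat]
    intro hmem
    simp only [List.concat_eq_append, List.mem_append, List.mem_singleton] at hmem
    rcases hmem with hmem | he
    · exact lfO_not_mem_xW hg hn hmem
    · exact lfO_ne_lfO (Or.inl (by omega)) he
  rw [T.dist_eq_of_isPath _ hp]
  simp only [Walk.darts_cons, Walk.darts_concat, List.concat_eq_append, List.map_cons,
    List.map_append, List.sum_cons, List.sum_append, List.map_nil, List.sum_nil]
  rw [w_lf hw s hi, xW_sum hg hw hn, T.w_symm, w_lf hw t hj]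
  push_cast
  ring

lemma dist_lf_lf_same (hg : T.g = catGraphO n) (hw : T.w = catWO n)
    {i : ℕ} (hi hi' : i < n - 1) {s t : Fin 2} (hst : s ≠ t) :
    T.dist (lfO n s i hi) (lfO n t i hi') = 2 * (n : ℝ) := by
  have hee : lfO n t i hi' = lfO n t i hi := rfl
  rw [hee]
  have hp : (Walk.cons (adj_lf_x hg s hi)
      (Walk.cons (adj_lf_x hg t hi).symm Walk.nil)).IsPath := by
    rw [Walk.cons_isPath_iff, Walk.cons_isPath_iff]
    refine ⟨⟨Walk.IsPath.nil, ?_⟩, ?_⟩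
    · simp only [Walk.support_nil, List.mem_singleton]
      exact fun he => lfO_ne_inl he.symm
    · simp only [Walk.support_cons, Walk.support_nil, List.mem_cons, List.mem_singleton]
      rintro (he | he | he)
      · exact lfO_ne_inl he
      · exact lfO_ne_lfO (Or.inr hst) he
      · exact absurd he List.not_mem_nil
  rw [T.dist_eq_of_isPath _ hp]
  simp only [Walk.darts_cons, Walk.darts_nil, List.map_cons, List.map_nil, List.sum_cons,
    List.sum_nil]
  rw [w_lf hw s hi, T.w_symm, w_lf hw t hi]
  ring

lemma dist_lf_vn_left (hg : T.g = catGraphO n) (hw : T.w = catWO n) (hn : 5 ≤ n)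
    (h2 : n % 2 = 1) {i : ℕ} (hi1 : i < n - 1) (hi : i < n / 2) (s : Fin 2) :
    T.dist (lfO n s i hi1) (vnO n) = 2 * (n : ℝ) - 1 - 2 * (i : ℝ) := by
  have hee : lfO n s i hi1 = lfO n s i (by omega) := rfl
  rw [hee]
  have hsp := spineW_isPath hg i (n / 2 - 1) (by omega) (by omega) (Or.inl (by omega))
  have hq1 := isPath_concat_of hsp ((adj_y_x hg (by omega) (Or.inl (by omega))).symm :
    T.g.Adj (Sum.inl ⟨n / 2 - 1, by omega⟩) (yO n)) (by
      intro hmem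
      obtain ⟨m, hm, _, _, he⟩ := spineW_support hg _ _ _ _ _ _ hmem
      simp at he)
  have hq2 := isPath_concat_of hq1 (adj_y_vn hg) (by
    rw [Walk.support_concat]
    intro hmem
    simp only [List.concat_eq_append, List.mem_append, List.mem_singleton] at hmem
    rcases hmem with hmem | he
    · obtain ⟨m, hm, _, _, he⟩ := spineW_support hg _ _ _ _ _ _ hmem
      simp at he
    · simp at he)
  have hp : (Walk.cons (adj_lf_x hg s (by omega : i < n - 1)) (((spineW hg i (n / 2 - 1)
      (by omega) (by omega) (Or.inl (by omega))).concat
      ((adj_y_x hg (by omega) (Or.inl (by omega))).symm)).concat (adj_y_vn hg))).IsPath := by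
    rw [Walk.cons_isPath_iff]
    refine ⟨hq2, ?_⟩
    rw [Walk.support_concat, Walk.support_concat]
    intro hmem
    simp only [List.concat_eq_append, List.mem_append, List.mem_singleton] at hmem
    rcases hmem with (hmem | he) | he
    · obtain ⟨m, hm, _, _, he⟩ := spineW_support hg _ _ _ _ _ _ hmem
      exact lfO_ne_inl he
    · exact lfO_ne_y he
    · exact lfO_ne_vn he
  rw [T.dist_eq_of_isPath _ hp]
  simp only [Walk.darts_cons, Walk.darts_concat, List.concat_eq_append, List.map_cons,
    List.map_append, List.sum_cons, List.sum_append, List.map_nil, List.sum_nil]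
  rw [w_lf hw s _, spineW_sum hg hw]
  have e1 : T.w (Sum.inl ⟨n / 2 - 1, by omega⟩) (yO n) = 1 := by rw [hw]; rfl
  have e2 : T.w (yO n) (vnO n) = 1 := by rw [hw]; rfl
  rw [e1, e2]
  have hc : ((n / 2 - 1 : ℕ) : ℝ) = ((n / 2 : ℕ) : ℝ) - 1 := by
    rw [Nat.cast_sub (by omega)]; simp
  have hc2 : 2 * ((n / 2 : ℕ) : ℝ) = (n : ℝ) - 1 := by
    have : (2 * (n / 2) : ℕ) = n - 1 := by omega
    calc 2 * ((n / 2 : ℕ) : ℝ) = ((2 * (n / 2) : ℕ) : ℝ) := by push_cast; ring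
    _ = ((n - 1 : ℕ) : ℝ) := by rw [this]
    _ = (n : ℝ) - 1 := by rw [Nat.cast_sub (by omega)]; simp
  rw [hc]
  linarith

lemma dist_lf_vn_right (hg : T.g = catGraphO n) (hw : T.w = catWO n) (hn : 5 ≤ n)
    (h2 : n % 2 = 1) {i : ℕ} (hi : i < n - 1) (hi2 : n / 2 ≤ i) (s : Fin 2) :
    T.dist (lfO n s i hi) (vnO n) = 2 * (i : ℝ) + 3 := by
  rw [T.dist_comm]
  have hsp := spineW_isPath hg (n / 2) i hi hi2 (Or.inr le_rfl)
  have hq1 := isPath_concat_of hsp (adj_lf_x hg s hi).symm (by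
    intro hmem
    obtain ⟨m, hm, _, _, he⟩ := spineW_support hg _ _ _ _ _ _ hmem
    exact lfO_ne_inl he)
  have hp : (Walk.cons (adj_y_vn hg).symm (Walk.cons
      (adj_y_x hg (show n / 2 < n - 1 by omega) (Or.inr rfl))
      ((spineW hg (n / 2) i hi hi2 (Or.inr le_rfl)).concat (adj_lf_x hg s hi).symm))).IsPath := by
    rw [Walk.cons_isPath_iff, Walk.cons_isPath_iff]
    refine ⟨⟨hq1, ?_⟩, ?_⟩
    · rw [Walk.support_concat]
      intro hmem
      simp only [List.concat_eq_append, List.mem_append, List.mem_singleton] at hmem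
      rcases hmem with hmem | he
      · obtain ⟨m, hm, _, _, he⟩ := spineW_support hg _ _ _ _ _ _ hmem
        simp at he
      · exact lfO_ne_y he.symm
    · simp only [Walk.support_cons, List.mem_cons]
      rintro (he | hmem)
      · simp at he
      · rw [Walk.support_concat] at hmem
        simp only [List.concat_eq_append, List.mem_append, List.mem_singleton] at hmem
        rcases hmem with hmem | he
        · obtain ⟨m, hm, _, _, he⟩ := spineW_support hg _ _ _ _ _ _ hmem
          simp at he
        · exact lfO_ne_vn he.symm
  rw [T.dist_eq_of_isPath _ hp]
  simp only [Walk.darts_cons, Walk.darts_concat, List.concat_eq_append, List.map_cons,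
    List.map_append, List.sum_cons, List.sum_append, List.map_nil, List.sum_nil]
  rw [spineW_sum hg hw, T.w_symm _ (lfO n s i hi), w_lf hw s hi]
  have e1 : T.w (vnO n) (yO n) = 1 := by rw [hw]; rfl
  have e2 : T.w (yO n) (Sum.inl (⟨n / 2, by omega⟩ : Fin (n - 1))) = 1 := by rw [hw]; rfl
  rw [e1, e2]
  have hc2 : 2 * ((n / 2 : ℕ) : ℝ) = (n : ℝ) - 1 := by
    have h3 : (2 * (n / 2) : ℕ) = n - 1 := by omega
    calc 2 * ((n / 2 : ℕ) : ℝ) = ((2 * (n / 2) : ℕ) : ℝ) := by push_cast; ring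
    _ = ((n - 1 : ℕ) : ℝ) := by rw [h3]
    _ = (n : ℝ) - 1 := by rw [Nat.cast_sub (by omega)]; simp
  linarith

end Dist
section Leaves

variable {n : ℕ} {T : WTree (CatVO n)}

lemma isLeaf_lf (hg : T.g = catGraphO n) (s : Fin 2) {i : ℕ} (h : i < n - 1) :
    T.IsLeaf (lfO n s i h) := by
  refine ⟨Sum.inl ⟨i, h⟩, adj_lf_x hg s h, ?_⟩
  intro a ha
  rw [hg, catGraphO, fromRel_adj] at ha
  obtain ⟨-, hr | hr⟩ := ha <;>
    fin_cases s <;> rcases a with j | j | j | u | u <;>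
    simp_all [catRelO, lfO]

lemma isLeaf_vn (hg : T.g = catGraphO n) : T.IsLeaf (vnO n) := by
  refine ⟨yO n, (adj_y_vn hg).symm, ?_⟩
  intro a ha
  rw [hg, catGraphO, fromRel_adj] at ha
  obtain ⟨-, hr | hr⟩ := ha <;> rcases a with j | j | j | u | u <;>
    simp_all [catRelO]

lemma not_isLeaf_x (hg : T.g = catGraphO n) (k : Fin (n - 1)) :
    ¬ T.IsLeaf (Sum.inl k) := by
  rintro ⟨u, -, huniq⟩
  obtain ⟨i, hik⟩ := k
  have h1 := huniq _ (adj_lf_x hg 0 hik).symm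
  have h2 := huniq _ (adj_lf_x hg 1 hik).symm
  rw [← h2] at h1
  exact lfO_ne_lfO (Or.inr (by decide)) h1

lemma not_isLeaf_y (hg : T.g = catGraphO n) (hn : 5 ≤ n) : ¬ T.IsLeaf (yO n) := by
  rintro ⟨u, -, huniq⟩
  have h1 := huniq _ (adj_y_x hg (show n / 2 < n - 1 by omega) (Or.inr rfl))
  have h2 := huniq _ (adj_y_vn hg)
  rw [← h2] at h1
  simp at h1

lemma leafMapO_lt {n : ℕ} {i : ℕ} (hi : i < n) (h : i < n - 1) (s : Fin 2) :
    leafMapO n (⟨i, hi⟩, s) = lfO n s i h := by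
  rw [leafMapO, lfO]
  simp only [dif_pos (show ((⟨i, hi⟩ : Fin n)).val < n - 1 from h)]

lemma leafMapO_last {n : ℕ} {i : ℕ} (hi : i < n) (h : ¬ i < n - 1) (s : Fin 2) :
    leafMapO n (⟨i, hi⟩, s) = vnO n := by
  rw [leafMapO]
  simp only [dif_neg (show ¬ ((⟨i, hi⟩ : Fin n)).val < n - 1 from h)]

end Leaves
section Iffs

variable {n : ℕ} {T : WTree (CatVO n)}

lemma adjChar (hn : 5 ≤ n) {i j : ℕ} (hi : i < n) (hj : j < n) (s t : Fin 2) :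
    (strongProdC2 n).Adj (⟨i, hi⟩, s) (⟨j, hj⟩, t) ↔
      (¬(i = j ∧ s = t) ∧ (i = j ∨ i + 1 = j ∨ j + 1 = i ∨ (i = n - 1 ∧ j = 0) ∨
        (j = n - 1 ∧ i = 0))) := by
  have base : (strongProdC2 n).Adj (⟨i, hi⟩, s) (⟨j, hj⟩, t) ↔
      ((⟨i, hi⟩, s) : Fin n × Fin 2) ≠ (⟨j, hj⟩, t) ∧
        ((⟨i, hi⟩ : Fin n) = ⟨j, hj⟩ ∨ (i + 1) % n = j ∨ (j + 1) % n = i) := Iff.rfl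
  rw [base]
  have hin : (i + 1) % n = if i + 1 = n then 0 else i + 1 := by
    split
    · rename_i h; rw [h, Nat.mod_self]
    · exact Nat.mod_eq_of_lt (by omega)
  have hjn : (j + 1) % n = if j + 1 = n then 0 else j + 1 := by
    split
    · rename_i h; rw [h, Nat.mod_self]
    · exact Nat.mod_eq_of_lt (by omega)
  rw [hin, hjn]
  simp only [ne_eq, Prod.mk.injEq, Fin.mk.injEq, Fin.ext_iff, not_and]
  by_cases e1 : i + 1 = n <;> by_cases e2 : j + 1 = n <;>
    simp only [e1, e2, if_true, if_false, ite_true, ite_false] <;>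
    constructor <;> rintro ⟨h1, h2⟩ <;> exact ⟨h1, by omega⟩

end Iffs
section RangeIffs

variable {n : ℕ} {T : WTree (CatVO n)}

lemma fin2_eq_one {s : Fin 2} (h : s ≠ 0) : s = 1 := by fin_cases s <;> simp_all

lemma mid_iff_lt (hg : T.g = catGraphO n) (hw : T.w = catWO n) (hn : 5 ≤ n)
    {i j : ℕ} (hi : i < n - 1) (hj : j < n - 1) (hij : i < j) (s t : Fin 2) :
    (2 * (n : ℝ) - 2 ≤ T.dist (lfO n s i hi) (lfO n t j hj) ∧
      T.dist (lfO n s i hi) (lfO n t j hj) ≤ 2 * (n : ℝ) + 2) ↔ j = i + 1 := by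
  rw [dist_lf_lf_lt hg hw hn hi hj hij s t]
  constructor
  · rintro ⟨-, hb⟩
    have hr : (j : ℝ) ≤ (i : ℝ) + 1 := by linarith
    have : j ≤ i + 1 := by exact_mod_cast hr
    omega
  · rintro rfl
    push_cast
    constructor <;> linarith

lemma vn_left_iff (hg : T.g = catGraphO n) (hw : T.w = catWO n) (hn : 5 ≤ n)
    (h2 : n % 2 = 1) {i : ℕ} (hi1 : i < n - 1) (hi : i < n / 2) (s : Fin 2) :
    (2 * (n : ℝ) - 2 ≤ T.dist (lfO n s i hi1) (vnO n) ∧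
      T.dist (lfO n s i hi1) (vnO n) ≤ 2 * (n : ℝ) + 2) ↔ i = 0 := by
  rw [dist_lf_vn_left hg hw hn h2 hi1 hi s]
  constructor
  · rintro ⟨ha, -⟩
    have hr : (i : ℝ) < 1 := by linarith
    have : i < 1 := by exact_mod_cast hr
    omega
  · rintro rfl
    have h5 : (5 : ℝ) ≤ (n : ℝ) := by exact_mod_cast hn
    push_cast
    constructor <;> linarith

lemma vn_right_iff (hg : T.g = catGraphO n) (hw : T.w = catWO n) (hn : 5 ≤ n)
    (h2 : n % 2 = 1) {i : ℕ} (hi : i < n - 1) (hi2 : n / 2 ≤ i) (s : Fin 2) :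
    (2 * (n : ℝ) - 2 ≤ T.dist (lfO n s i hi) (vnO n) ∧
      T.dist (lfO n s i hi) (vnO n) ≤ 2 * (n : ℝ) + 2) ↔ i = n - 2 := by
  rw [dist_lf_vn_right hg hw hn h2 hi hi2 s]
  constructor
  · rintro ⟨ha, -⟩
    have hr : 2 * (n : ℝ) ≤ 2 * (i : ℝ) + 5 := by linarith
    have : 2 * n ≤ 2 * i + 5 := by exact_mod_cast hr
    omega
  · rintro rfl
    have h5 : (5 : ℝ) ≤ (n : ℝ) := by exact_mod_cast hn
    have hc : ((n - 2 : ℕ) : ℝ) = (n : ℝ) - 2 := by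
      rw [Nat.cast_sub (by omega)]; push_cast; ring
    rw [hc]
    constructor <;> linarith

end RangeIffs
theorem caterpillar_odd_pcg (n : ℕ) (hn : 5 ≤ n) (hodd : Odd n)
    (T : WTree (CatVO n)) (hg : T.g = catGraphO n) (hw : T.w = catWO n) :
    IsPCGWith ((strongProdC2 n).induce {p | p ≠ ((⟨n - 1, by omega⟩ : Fin n), (0 : Fin 2))})
      T (fun p => leafMapO n p.1) (2 * (n : ℝ) - 2) (2 * (n : ℝ) + 2) := by
  have h2 : n % 2 = 1 := Nat.odd_iff.mp hodd
  have h5 : (5 : ℝ) ≤ (n : ℝ) := by exact_mod_cast hn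
  refine ⟨?_, ?_, ?_, ?_⟩
  · -- injectivity
    rintro ⟨⟨⟨i, hi⟩, s⟩, ha⟩ ⟨⟨⟨j, hj⟩, t⟩, hb⟩ hab
    simp only at hab
    by_cases hA : i < n - 1 <;> by_cases hB : j < n - 1
    · rw [leafMapO_lt hi hA s, leafMapO_lt hj hB t] at hab
      rcases eq_or_ne i j with rfl | hne
      · rcases eq_or_ne s t with rfl | hst
        · rfl
        · exact absurd hab (lfO_ne_lfO (Or.inr hst))
      · exact absurd hab (lfO_ne_lfO (Or.inl hne))
    · rw [leafMapO_lt hi hA s, leafMapO_last hj hB t] at hab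
      exact absurd hab lfO_ne_vn
    · rw [leafMapO_last hi hA s, leafMapO_lt hj hB t] at hab
      exact absurd hab.symm lfO_ne_vn
    · have hi' : i = n - 1 := by omega
      have hj' : j = n - 1 := by omega
      have hs : s = 1 := by
        refine fin2_eq_one fun h0 => ha ?_
        subst h0; subst hi'; rfl
      have ht : t = 1 := by
        refine fin2_eq_one fun h0 => hb ?_
        subst h0; subst hj'; rfl
      subst hs; subst ht; subst hi'; subst hj'
      rfl
  · -- all images are leaves
    rintro ⟨⟨⟨i, hi⟩, s⟩, ha⟩
    simp only
    by_cases hA : i < n - 1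
    · rw [leafMapO_lt hi hA s]; exact isLeaf_lf hg s hA
    · rw [leafMapO_last hi hA s]; exact isLeaf_vn hg
  · -- every leaf is hit
    rintro (k | k | k | u | u) hb
    · exact absurd hb (not_isLeaf_x hg k)
    · obtain ⟨i, hik⟩ := k
      refine ⟨⟨(⟨i, by omega⟩, 0), ?_⟩, ?_⟩
      · intro he
        simp only [Prod.mk.injEq, Fin.mk.injEq] at he
        omega
      · simp only
        rw [leafMapO_lt (by omega) hik 0]
        rfl
    · obtain ⟨i, hik⟩ := k
      refine ⟨⟨(⟨i, by omega⟩, 1), ?_⟩, ?_⟩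
      · intro he
        simp only [Prod.mk.injEq, Fin.mk.injEq] at he
        omega
      · simp only
        rw [leafMapO_lt (by omega) hik 1]
        rfl
    · exact absurd hb (not_isLeaf_y hg hn)
    · refine ⟨⟨(⟨n - 1, by omega⟩, 1), ?_⟩, ?_⟩
      · intro he
        simp only [Prod.mk.injEq, Fin.mk.injEq] at he
        exact absurd he.2 (by decide)
      · simp only
        rw [leafMapO_last (by omega) (by omega) 1]
  · -- adjacency iff distance in range
    rintro ⟨⟨⟨i, hi⟩, s⟩, ha⟩ ⟨⟨⟨j, hj⟩, t⟩, hb⟩ huv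
    have hne : ¬(i = j ∧ s = t) := by
      rintro ⟨hij, hst⟩
      exact huv (Subtype.ext (by subst hij; subst hst; rfl))
    have hAdj : ((strongProdC2 n).induce
          {p | p ≠ ((⟨n - 1, by omega⟩ : Fin n), (0 : Fin 2))}).Adj
          ⟨(⟨i, hi⟩, s), ha⟩ ⟨(⟨j, hj⟩, t), hb⟩ ↔
        (strongProdC2 n).Adj (⟨i, hi⟩, s) (⟨j, hj⟩, t) := Iff.rfl
    rw [hAdj, adjChar hn hi hj s t]
    simp only
    by_cases hA : i < n - 1 <;> by_cases hB : j < n - 1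
    · rw [leafMapO_lt hi hA s, leafMapO_lt hj hB t]
      rcases Nat.lt_trichotomy i j with hij | rfl | hij
      · rw [mid_iff_lt hg hw hn hA hB hij s t]
        constructor
        · rintro ⟨-, hc⟩; omega
        · intro hc
          exact ⟨fun hcc => absurd hcc.1 (by omega), by omega⟩
      · have hst : s ≠ t := fun h => hne ⟨rfl, h⟩
        rw [dist_lf_lf_same hg hw hA hB hst]
        refine iff_of_true ⟨fun hcc => hst hcc.2, Or.inl rfl⟩ ⟨by linarith, by linarith⟩
      · rw [T.dist_comm, mid_iff_lt hg hw hn hB hA hij t s]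
        constructor
        · rintro ⟨-, hc⟩; omega
        · intro hc
          exact ⟨fun hcc => absurd hcc.1 (by omega), by omega⟩
    · rw [leafMapO_lt hi hA s, leafMapO_last hj hB t]
      by_cases hside : i < n / 2
      · rw [vn_left_iff hg hw hn h2 hA hside s]
        constructor
        · rintro ⟨-, hc⟩; omega
        · intro hc
          exact ⟨fun hcc => absurd hcc.1 (by omega), by omega⟩
      · rw [vn_right_iff hg hw hn h2 hA (by omega) s]
        constructor
        · rintro ⟨-, hc⟩; omega
        · intro hc
          exact ⟨fun hcc => absurd hcc.1 (by omega), by omega⟩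
    · rw [leafMapO_last hi hA s, leafMapO_lt hj hB t, T.dist_comm]
      by_cases hside : j < n / 2
      · rw [vn_left_iff hg hw hn h2 hB hside t]
        constructor
        · rintro ⟨-, hc⟩; omega
        · intro hc
          exact ⟨fun hcc => absurd hcc.1 (by omega), by omega⟩
      · rw [vn_right_iff hg hw hn h2 hB (by omega) t]
        constructor
        · rintro ⟨-, hc⟩; omega
        · intro hc
          exact ⟨fun hcc => absurd hcc.1 (by omega), by omega⟩
    · exfalso
      have hi' : i = n - 1 := by omega
      have hj' : j = n - 1 := by omega
      have hs : s = 1 := by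
        refine fin2_eq_one fun h0 => ha ?_
        subst h0; subst hi'; rfl
      have ht : t = 1 := by
        refine fin2_eq_one fun h0 => hb ?_
        subst h0; subst hj'; rfl
      exact hne ⟨by omega, by rw [hs, ht]⟩
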